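/- Let G be a simple graph on vertices x_1,...,x_n and k ≥ 1 an integer. Define the graph G_k on vertex set {x_{i,p} : 1 ≤ i ≤ n, 1 ≤ p ≤ k} with an edge {x_{i,p}, x_{j,q}} whenever {x_i, x_j} is an edge of G and p + q ≤ k + 1. If {w_1,...,w_h} is a minimal vertex cover of G, then the set {w_{i,p} : 1 ≤ i ≤ h, 1 ≤ p ≤ k} is a minimal vertex cover of G_k. -/

import Mathlib

/-- The graph `G_k`: vertices `x_{i,p}` for `x_i ∈ V(G)` and `1 ≤ p ≤ k`
(encoded 0-indexed as `p : Fin k`), with `x_{i,p}` adjacent to `x_{j,q}` iff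
`x_i` is adjacent to `x_j` in `G` and `p + q ≤ k + 1` (1-indexed). -/
def graphPower {V : Type*} (G : SimpleGraph V) (k : ℕ) : SimpleGraph (V × Fin k) where
  Adj a b := G.Adj a.1 b.1 ∧ a.2.val + b.2.val + 2 ≤ k + 1
  symm := ⟨by rintro a b ⟨h1, h2⟩; exact ⟨h1.symm, by omega⟩⟩
  loopless := ⟨by rintro a ⟨h1, _⟩; exact G.irrefl h1⟩

/-- `C` is a vertex cover of `G`. -/
def IsVC {V : Type*} (G : SimpleGraph V) (C : Set V) : Prop :=
  ∀ ⦃u v : V⦄, G.Adj u v → u ∈ C ∨ v ∈ C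

/-- `C` is a minimal vertex cover of `G`. -/
def IsMinVC {V : Type*} (G : SimpleGraph V) (C : Set V) : Prop :=
  IsVC G C ∧ ∀ D : Set V, D ⊂ C → ¬ IsVC G D

/-- In a minimal vertex cover, every vertex has a neighbor outside the cover. -/
lemma exists_neighbor_outside {V : Type*} (G : SimpleGraph V) (C : Set V)
    (hC : IsMinVC G C) {w : V} (hw : w ∈ C) : ∃ v, G.Adj w v ∧ v ∉ C := by
  by_contra h
  push_neg at h
  apply hC.2 (C \ {w}) ⟨Set.diff_subset, fun hsub => (hsub hw).2 rfl⟩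
  intro u v huv
  rcases hC.1 huv with hu | hv
  · by_cases hu' : u = w
    · subst hu'
      exact Or.inr ⟨h v huv, fun hv' => G.loopless.irrefl u (hv' ▸ huv)⟩
    · exact Or.inl ⟨hu, hu'⟩
  · by_cases hv' : v = w
    · subst hv'
      exact Or.inl ⟨h u huv.symm, fun hu' => G.loopless.irrefl v (hu' ▸ huv)⟩
    · exact Or.inr ⟨hv, hv'⟩

/-- If `C = {w_1, …, w_h}` is a minimal vertex cover of `G`, then
`{w_{i,p} : w_i ∈ C, 1 ≤ p ≤ k}` is a minimal vertex cover of `G_k`. -/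
theorem stmt0 {V : Type*} (G : SimpleGraph V) (k : ℕ) (hk : 1 ≤ k)
    (C : Set V) (hC : IsMinVC G C) :
    IsMinVC (graphPower G k) (C ×ˢ (Set.univ : Set (Fin k))) := by
  constructor
  · rintro ⟨u, p⟩ ⟨v, q⟩ ⟨hadj, -⟩
    rcases hC.1 hadj with h | h
    · exact Or.inl ⟨h, Set.mem_univ _⟩
    · exact Or.inr ⟨h, Set.mem_univ _⟩
  · rintro D ⟨hsub, hne⟩ hD
    obtain ⟨⟨w, p⟩, hwp, hwpD⟩ : ∃ x ∈ C ×ˢ (Set.univ : Set (Fin k)), x ∉ D := by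
      by_contra h; push_neg at h; exact hne h
    obtain ⟨v, hwv, hvC⟩ := exists_neighbor_outside G C hC hwp.1
    have hadj : (graphPower G k).Adj (w, p) (v, ⟨0, hk⟩) := by
      refine ⟨hwv, ?_⟩
      have := p.isLt
      simp only []
      omega
    rcases hD hadj with h | h
    · exact hwpD h
    · exact hvC (hsub h).1
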